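/- Let (δ, ξ) be a pair where δ is Bernoulli(p) with p > 0 and ξ takes values in a measurable space (X, A). Let Q̃ denote the conditional distribution of ξ given δ = 1, and let R_k be the pushforward of the product measure Q̃^k under a measurable map t_k : X^k → ℝ^m (with R_0 a Dirac mass at a fixed constant t_0). If (δ_1, ξ_1), …, (δ_n, ξ_n) are i.i.d. copies of (δ, ξ) and T_{c,n} is the complete case statistic which on the event {δ_i = 1 for i ∈ A, δ_i = 0 for i ∉ A} equals t_{|A|} applied to the ξ_i with i ∈ A (in increasing order of index), then for every Borel set B ⊆ ℝ^m, P(T_{c,n} ∈ B) = ∑_{k=0}^{n} C(n,k) p^k (1-p)^{n-k} R_k(B). -/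

import Mathlib

open MeasureTheory ProbabilityTheory ENNReal
open Set

lemma pi_smul_aux {X : Type*} [MeasurableSpace X] (ν : Measure X) [IsFiniteMeasure ν]
    (c : ℝ≥0∞) (hc : c ≠ ∞) (k : ℕ) :
    Measure.pi (fun _ : Fin k => c • ν) = c ^ k • Measure.pi (fun _ : Fin k => ν) := by
  haveI : IsFiniteMeasure (c • ν) := ⟨by
    simp only [Measure.smul_apply, smul_eq_mul]
    exact ENNReal.mul_lt_top hc.lt_top (measure_lt_top ν _)⟩
  refine Measure.pi_eq fun s hs => ?_
  simp only [Measure.smul_apply, smul_eq_mul, Measure.pi_pi]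
  rw [Finset.prod_mul_distrib, Finset.prod_const, Finset.card_univ, Fintype.card_fin]

lemma pi_map_aux {X Y : Type*} [MeasurableSpace X] [MeasurableSpace Y]
    (ν : Measure X) [IsFiniteMeasure ν] {f : X → Y} (hf : Measurable f) (k : ℕ) :
    Measure.pi (fun _ : Fin k => Measure.map f ν) =
      Measure.map (fun y : Fin k → X => fun j => f (y j)) (Measure.pi (fun _ : Fin k => ν)) := by
  haveI : IsFiniteMeasure (Measure.map f ν) := ⟨by
    rw [Measure.map_apply hf MeasurableSet.univ]; exact measure_lt_top ν _⟩
  have hmeas : Measurable (fun y : Fin k → X => fun j => f (y j)) :=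
    measurable_pi_lambda _ fun j => hf.comp (measurable_pi_apply j)
  refine Measure.pi_eq fun s hs => ?_
  rw [Measure.map_apply hmeas (MeasurableSet.univ_pi hs)]
  have : (fun y : Fin k → X => fun j => f (y j)) ⁻¹' (univ.pi s)
      = univ.pi (fun j => f ⁻¹' s j) := by
    ext y; simp [Set.mem_pi]
  rw [this, Measure.pi_pi]
  simp_rw [Measure.map_apply hf (hs _)]

lemma pi_restrict_aux {X : Type*} [MeasurableSpace X] (ν : Measure X) [IsFiniteMeasure ν]
    {s : Set X} (hs : MeasurableSet s) (k : ℕ) :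
    Measure.pi (fun _ : Fin k => ν.restrict s) =
      (Measure.pi (fun _ : Fin k => ν)).restrict (univ.pi fun _ => s) := by
  refine Measure.pi_eq fun u hu => ?_
  rw [Measure.restrict_apply (MeasurableSet.univ_pi hu)]
  have : univ.pi u ∩ univ.pi (fun _ => s) = univ.pi (fun j => u j ∩ s) := by
    ext y; simp [Set.mem_pi, forall_and]
  rw [this, Measure.pi_pi]
  simp_rw [Measure.restrict_apply (hu _)]

lemma key_aux {X : Type*} [MeasurableSpace X]
    {m n : ℕ}
    (t : (k : ℕ) → (Fin k → X) → (Fin m → ℝ))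
    (ht : ∀ k, Measurable (t k))
    (μ : Measure (Bool × X)) [IsProbabilityMeasure μ]
    (p : ℝ≥0∞) (hp : p = μ {x | x.1 = true}) (hp0 : 0 < p)
    (Q : Measure X)
    (hQ : Q = p⁻¹ • Measure.map Prod.snd (μ.restrict {x | x.1 = true}))
    (R : ℕ → Measure (Fin m → ℝ))
    (hR : ∀ k, R k = Measure.map (t k) (Measure.pi (fun _ : Fin k => Q)))
    (B : Set (Fin m → ℝ)) (hB : MeasurableSet B) (A : Finset (Fin n)) :
    Measure.pi (fun _ : Fin n => μ) {x : Fin n → Bool × X |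
        (∀ i, ((x i).1 = true ↔ i ∈ A)) ∧
          t A.card (fun j => (x ((A.orderIsoOfFin rfl j) : Fin n)).2) ∈ B} =
      p ^ A.card * (1 - p) ^ (n - A.card) * R A.card B := by
  classical
  have hmsT : MeasurableSet {x : Bool × X | x.1 = true} :=
    measurable_fst (measurableSet_singleton true)
  have hmsF : MeasurableSet {x : Bool × X | x.1 = false} :=
    measurable_fst (measurableSet_singleton false)
  have hpt : p ≠ ∞ := by rw [hp]; exact measure_ne_top μ _
  have hpne : p ≠ 0 := hp0.ne'
  set k := A.card with hk
  set ν : Measure (Bool × X) := μ.restrict {x | x.1 = true} with hν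
  have hνuniv : ν univ = p := by rw [hν, Measure.restrict_apply_univ, hp]
  have hνX : Measure.map Prod.snd ν = p • Q := by
    rw [hQ, smul_smul, ENNReal.mul_inv_cancel hpne hpt, one_smul]
  haveI : IsProbabilityMeasure Q := by
    constructor
    rw [hQ]
    simp only [Measure.smul_apply, smul_eq_mul]
    rw [Measure.map_apply measurable_snd MeasurableSet.univ]
    simp only [Set.preimage_univ]
    rw [hνuniv, ENNReal.inv_mul_cancel hpne hpt]
  -- step 1: split by pattern via piEquivPiSubtypeProd
  set S : Set ({i : Fin n // i ∈ A} → Bool × X) :=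
    {y | (∀ j, (y j).1 = true) ∧ t k (fun j => (y (A.orderIsoOfFin rfl j)).2) ∈ B} with hS
  set T : Set ({i : Fin n // ¬ i ∈ A} → Bool × X) := {z | ∀ j, (z j).1 = false} with hT
  have hSmeas : MeasurableSet S := by
    have h1 : MeasurableSet {y : {i : Fin n // i ∈ A} → Bool × X | ∀ j, (y j).1 = true} := by
      rw [Set.setOf_forall]
      exact MeasurableSet.iInter fun j =>
        (measurable_fst.comp (measurable_pi_apply j)) (measurableSet_singleton true)
    have h2 : Measurable (fun y : {i : Fin n // i ∈ A} → Bool × X =>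
        t k (fun j => (y (A.orderIsoOfFin rfl j)).2)) :=
      (ht k).comp (measurable_pi_lambda _ fun j =>
        measurable_snd.comp (measurable_pi_apply _))
    exact h1.inter (h2 hB)
  have hTmeas : MeasurableSet T := by
    rw [hT, Set.setOf_forall]
    exact MeasurableSet.iInter fun j =>
      (measurable_fst.comp (measurable_pi_apply j)) (measurableSet_singleton false)
  have hsplit : {x : Fin n → Bool × X |
        (∀ i, ((x i).1 = true ↔ i ∈ A)) ∧
          t A.card (fun j => (x ((A.orderIsoOfFin rfl j) : Fin n)).2) ∈ B} =
      (MeasurableEquiv.piEquivPiSubtypeProd (fun _ : Fin n => Bool × X) (· ∈ A)) ⁻¹'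
        (S ×ˢ T) := by
    ext x
    simp only [Set.mem_setOf_eq, Set.mem_preimage, Set.mem_prod,
      MeasurableEquiv.piEquivPiSubtypeProd, MeasurableEquiv.coe_mk,
      Equiv.piEquivPiSubtypeProd, Equiv.coe_fn_mk, hS, hT]
    constructor
    · rintro ⟨h1, h2⟩
      exact ⟨⟨fun j => (h1 j).mpr j.2, h2⟩, fun j => by
        rcases Bool.eq_false_or_eq_true (x (j : Fin n)).1 with h | h
        · exact absurd ((h1 j).mp h) j.2
        · exact h⟩
    · rintro ⟨⟨h1, h2⟩, h3⟩
      refine ⟨fun i => ⟨fun hb => ?_, fun hi => h1 ⟨i, hi⟩⟩, h2⟩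
      by_contra hi
      have := h3 ⟨i, hi⟩
      rw [hb] at this; exact Bool.noConfusion this
  haveI : IsFiniteMeasure ν := ⟨by rw [hνuniv]; exact hpt.lt_top⟩
  rw [hsplit,
    (measurePreserving_piEquivPiSubtypeProd (fun _ : Fin n => μ) (· ∈ A)).measure_preimage
      (hSmeas.prod hTmeas).nullMeasurableSet,
    Measure.prod_prod]
  have hTval : Measure.pi (fun _ : {i : Fin n // ¬ i ∈ A} => μ) T = (1 - p) ^ (n - k) := by
    have hT2 : T = univ.pi (fun _ => {b : Bool × X | b.1 = false}) := by
      rw [hT]; ext z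
      simp only [Set.mem_setOf_eq, Set.mem_pi, Set.mem_univ, true_implies]
    have hμF : μ {b : Bool × X | b.1 = false} = 1 - p := by
      have hc : {b : Bool × X | b.1 = false} = {b : Bool × X | b.1 = true}ᶜ := by
        ext b
        simp only [Set.mem_setOf_eq, Set.mem_compl_iff, Bool.not_eq_true]
      rw [hc, measure_compl hmsT (measure_ne_top μ _), measure_univ, hp]
    rw [hT2, Measure.pi_pi]
    simp_rw [hμF]
    rw [Finset.prod_const, Finset.card_univ]
    congr 1
    rw [Fintype.card_subtype_compl, Fintype.card_fin]
    congr 1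
    exact Fintype.card_coe A
  have hg := measurePreserving_piCongrLeft (fun _ : {i : Fin n // i ∈ A} => μ)
    (A.orderIsoOfFin rfl).toEquiv
  have hSval : Measure.pi (fun _ : {i : Fin n // i ∈ A} => μ) S = p ^ k * R k B := by
    rw [← hg.measure_preimage hSmeas.nullMeasurableSet]
    have hpre : (MeasurableEquiv.piCongrLeft (fun _ : {i : Fin n // i ∈ A} => Bool × X)
          (A.orderIsoOfFin rfl).toEquiv) ⁻¹' S
        = {y : Fin k → Bool × X | (∀ j, (y j).1 = true) ∧ t k (fun j => (y j).2) ∈ B} := by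
      ext y
      simp only [Set.mem_preimage, hS, Set.mem_setOf_eq, MeasurableEquiv.piCongrLeft,
        MeasurableEquiv.coe_mk]
      constructor
      · rintro ⟨h1, h2⟩
        refine ⟨fun j => ?_, ?_⟩
        · have := h1 ((A.orderIsoOfFin rfl).toEquiv j)
          rwa [Equiv.piCongrLeft_apply_apply] at this
        · have : (fun j => ((Equiv.piCongrLeft (fun _ : {i : Fin n // i ∈ A} => Bool × X)
              (A.orderIsoOfFin rfl).toEquiv y) ((A.orderIsoOfFin rfl) j)).2)
              = fun j => (y j).2 := by
            funext j
            rw [show ((A.orderIsoOfFin rfl) j : {i : Fin n // i ∈ A})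
                = (A.orderIsoOfFin rfl).toEquiv j from rfl, Equiv.piCongrLeft_apply_apply]
          rwa [this] at h2
      · rintro ⟨h1, h2⟩
        refine ⟨fun j' => ?_, ?_⟩
        · have hj' : j' = (A.orderIsoOfFin rfl).toEquiv
              ((A.orderIsoOfFin rfl).toEquiv.symm j') :=
            (Equiv.apply_symm_apply _ _).symm
          rw [hj', Equiv.piCongrLeft_apply_apply]
          exact h1 _
        · have : (fun j => ((Equiv.piCongrLeft (fun _ : {i : Fin n // i ∈ A} => Bool × X)
              (A.orderIsoOfFin rfl).toEquiv y) ((A.orderIsoOfFin rfl) j)).2)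
              = fun j => (y j).2 := by
            funext j
            rw [show ((A.orderIsoOfFin rfl) j : {i : Fin n // i ∈ A})
                = (A.orderIsoOfFin rfl).toEquiv j from rfl, Equiv.piCongrLeft_apply_apply]
          rwa [this]
    rw [hpre]
    have hcoordmeas : Measurable (fun y : Fin k → Bool × X => fun j => (y j).2) :=
      measurable_pi_lambda _ fun j => measurable_snd.comp (measurable_pi_apply j)
    have hset : {y : Fin k → Bool × X | (∀ j, (y j).1 = true) ∧ t k (fun j => (y j).2) ∈ B}
        = ((fun y : Fin k → Bool × X => fun j => (y j).2) ⁻¹' (t k ⁻¹' B))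
            ∩ (univ.pi fun _ => {b : Bool × X | b.1 = true}) := by
      ext y; simp only [Set.mem_inter_iff, Set.mem_preimage, Set.mem_pi, Set.mem_univ,
        Set.mem_setOf_eq, true_implies, and_comm]
    rw [hset, ← Measure.restrict_apply (hcoordmeas ((ht k) hB)),
      ← pi_restrict_aux μ hmsT k]
    rw [show (fun _ : Fin k => μ.restrict {x : Bool × X | x.1 = true}) = fun _ : Fin k => ν
      from rfl]
    rw [← Measure.map_apply hcoordmeas ((ht k) hB), ← pi_map_aux ν measurable_snd k, hνX,
      pi_smul_aux Q p hpt k]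
    simp only [Measure.smul_apply, smul_eq_mul]
    rw [hR k, Measure.map_apply (ht k) hB]
  have hfinal : (Measure.pi fun _ : {i : Fin n // i ∈ A} => μ) S *
      (Measure.pi fun _ : {i : Fin n // ¬ i ∈ A} => μ) T
      = p ^ k * (1 - p) ^ (n - k) * R k B := by rw [hSval, hTval]; ring
  convert hfinal using 4 <;> exact Subsingleton.elim _ _


/-- The complete case statistic associated with the sequence of maps `t`:
on the event where exactly the indices in `A` have `δ i = true`, it equals
`t |A|` applied to the `ξ i` with `i ∈ A`, in increasing order of index. -/
noncomputable def ccStat {Ω X E : Type*} {n : ℕ}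
    (t : (k : ℕ) → (Fin k → X) → E)
    (δ : Fin n → Ω → Bool) (ξ : Fin n → Ω → X) (ω : Ω) : E :=
  let s : Finset (Fin n) := Finset.univ.filter (fun i => δ i ω = true)
  t s.card (fun j => ξ (s.orderIsoOfFin rfl j) ω)

/-- Lemma 1 of Koul, Müller and Schick: the distribution of the complete case
statistic is the binomial mixture of the laws `R k`, where `R k` is the pushforward
of the `k`-fold product of the conditional law `Q̃` of `ξ` given `δ = 1` under `t k`. -/
theorem complete_case_distribution
    {Ω X : Type*} [MeasurableSpace Ω] [MeasurableSpace X]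
    (P : Measure Ω) [IsProbabilityMeasure P]
    {m n : ℕ}
    (t : (k : ℕ) → (Fin k → X) → (Fin m → ℝ))
    (ht : ∀ k, Measurable (t k))
    (δ : Fin n → Ω → Bool) (ξ : Fin n → Ω → X)
    (hδ : ∀ i, Measurable (δ i)) (hξ : ∀ i, Measurable (ξ i))
    -- `(δ_i, ξ_i)` are i.i.d. copies of a pair with common law `μ`
    (μ : Measure (Bool × X)) [IsProbabilityMeasure μ]
    (hiid : Measure.map (fun ω => fun i : Fin n => (δ i ω, ξ i ω)) P =
      Measure.pi (fun _ : Fin n => μ))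
    -- `p = P(δ = 1) > 0`
    (p : ℝ≥0∞) (hp : p = μ {x | x.1 = true}) (hp0 : 0 < p)
    -- `Q̃` is the conditional law of `ξ` given `δ = 1`
    (Q : Measure X)
    (hQ : Q = p⁻¹ • Measure.map Prod.snd (μ.restrict {x | x.1 = true}))
    -- `R k` is the law of `t k (ξ̃_1, …, ξ̃_k)` for i.i.d. `ξ̃_i ∼ Q̃`
    (R : ℕ → Measure (Fin m → ℝ))
    (hR : ∀ k, R k = Measure.map (t k) (Measure.pi (fun _ : Fin k => Q)))
    (B : Set (Fin m → ℝ)) (hB : MeasurableSet B) :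
    P {ω | ccStat t δ ξ ω ∈ B} =
      ∑ k ∈ Finset.range (n + 1),
        (n.choose k : ℝ≥0∞) * p ^ k * (1 - p) ^ (n - k) * R k B := by
  classical
  set φ : Ω → (Fin n → Bool × X) := fun ω i => (δ i ω, ξ i ω) with hφ
  have hφm : Measurable φ := measurable_pi_lambda _ fun i => ((hδ i).prodMk (hξ i))
  set E : Finset (Fin n) → Set (Fin n → Bool × X) := fun A =>
    {x | (∀ i, ((x i).1 = true ↔ i ∈ A)) ∧
      t A.card (fun j => (x ((A.orderIsoOfFin rfl j) : Fin n)).2) ∈ B} with hE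
  have hEmeas : ∀ A, MeasurableSet (E A) := by
    intro A
    have h1 : MeasurableSet {x : Fin n → Bool × X | ∀ i, ((x i).1 = true ↔ i ∈ A)} := by
      rw [Set.setOf_forall]
      refine MeasurableSet.iInter fun i => ?_
      by_cases hi : i ∈ A
      · simp only [hi, iff_true]
        exact (measurable_fst.comp (measurable_pi_apply i)) (measurableSet_singleton true)
      · simp only [hi, iff_false, Bool.not_eq_true]
        exact (measurable_fst.comp (measurable_pi_apply i)) (measurableSet_singleton false)
    have h2 : Measurable fun x : Fin n → Bool × X =>
        t A.card (fun j => (x ((A.orderIsoOfFin rfl j) : Fin n)).2) :=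
      (ht _).comp (measurable_pi_lambda _ fun j =>
        measurable_snd.comp (measurable_pi_apply _))
    exact h1.inter (h2 hB)
  have hfilter : ∀ (ω : Ω) (A : Finset (Fin n)),
      (∀ i, (δ i ω = true ↔ i ∈ A)) ↔ Finset.univ.filter (fun i => δ i ω = true) = A := by
    intro ω A
    rw [Finset.ext_iff]
    constructor
    · intro h i; rw [Finset.mem_filter]; constructor
      · rintro ⟨-, hb⟩; exact (h i).mp hb
      · intro hi; exact ⟨Finset.mem_univ i, (h i).mpr hi⟩
    · intro h i
      have := h i
      rw [Finset.mem_filter] at this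
      constructor
      · intro hb; exact this.mp ⟨Finset.mem_univ i, hb⟩
      · intro hi; exact (this.mpr hi).2
  have hdecomp : {ω | ccStat t δ ξ ω ∈ B}
      = ⋃ A ∈ (Finset.univ : Finset (Finset (Fin n))), φ ⁻¹' (E A) := by
    ext ω
    simp only [Set.mem_setOf_eq, Set.mem_iUnion, Set.mem_preimage, Finset.mem_univ,
      exists_true_left, true_and]
    constructor
    · intro h
      refine ⟨Finset.univ.filter (fun i => δ i ω = true), ⟨fun i => ?_, h⟩⟩
      simp [Finset.mem_filter, hφ]
    · rintro ⟨A, hA1, hA2⟩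
      have hsA : Finset.univ.filter (fun i => δ i ω = true) = A := (hfilter ω A).mp hA1
      show t (Finset.univ.filter (fun i => δ i ω = true)).card
        (fun j => ξ (((Finset.univ.filter (fun i => δ i ω = true)).orderIsoOfFin rfl j) : Fin n) ω)
        ∈ B
      rw [hsA]
      exact hA2
  have hdisj : (↑(Finset.univ : Finset (Finset (Fin n))) : Set (Finset (Fin n))).Pairwise
      (Function.onFun Disjoint fun A => φ ⁻¹' (E A)) := by
    intro A _ A' _ hne
    rw [Function.onFun, Set.disjoint_left]
    intro ω h1 h2
    have e1 : Finset.univ.filter (fun i => δ i ω = true) = A := (hfilter ω A).mp h1.1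
    have e2 : Finset.univ.filter (fun i => δ i ω = true) = A' := (hfilter ω A').mp h2.1
    exact hne (e1 ▸ e2)
  rw [hdecomp, measure_biUnion_finset hdisj (fun A _ => hφm (hEmeas A))]
  have hPA : ∀ A : Finset (Fin n),
      P (φ ⁻¹' E A) = p ^ A.card * (1 - p) ^ (n - A.card) * R A.card B := by
    intro A
    have : P (φ ⁻¹' E A) = Measure.pi (fun _ : Fin n => μ) (E A) := by
      rw [← hiid, Measure.map_apply hφm (hEmeas A)]
    exact this.trans (key_aux t ht μ p hp hp0 Q hQ R hR B hB A)
  calc ∑ A ∈ (Finset.univ : Finset (Finset (Fin n))), P (φ ⁻¹' E A)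
      = ∑ A ∈ (Finset.univ : Finset (Finset (Fin n))),
          p ^ A.card * (1 - p) ^ (n - A.card) * R A.card B :=
        Finset.sum_congr rfl fun A _ => hPA A
    _ = ∑ k ∈ Finset.range (n + 1), ∑ A ∈ Finset.powersetCard k (Finset.univ : Finset (Fin n)),
          p ^ A.card * (1 - p) ^ (n - A.card) * R A.card B := by
        rw [← Finset.powerset_univ, Finset.powerset_card_disjiUnion]
        simp only [Finset.card_univ, Fintype.card_fin]
        rw [Finset.sum_disjiUnion]
    _ = ∑ k ∈ Finset.range (n + 1),
          (n.choose k : ℝ≥0∞) * p ^ k * (1 - p) ^ (n - k) * R k B := by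
        refine Finset.sum_congr rfl fun k hk => ?_
        rw [Finset.sum_congr rfl (fun A hA => by
          rw [(Finset.mem_powersetCard_univ.mp hA : A.card = k)])]
        rw [Finset.sum_const, Finset.card_powersetCard, Finset.card_univ, Fintype.card_fin,
          nsmul_eq_mul]
        ring
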